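/- If the induced hyperspace system (K(X), T_K) is an M-system (transitive with dense minimal points), then (X,T) is a weakly mixing M-system. -/

import Mathlib

open MeasureTheory Topology Set Function TopologicalSpace

noncomputable section

namespace Paper

/-- The orbit closure of a point. -/
def orbitClosure {α : Type*} [TopologicalSpace α] (T : α → α) (x : α) : Set α :=
  closure (Set.range fun n : ℕ => T^[n] x)

/-- Topological transitivity: `N(U,V)` is infinite for all non-empty open `U, V`. -/
def IsTransitive {α : Type*} [TopologicalSpace α] (T : α → α) : Prop :=
  ∀ U V : Set α, IsOpen U → U.Nonempty → IsOpen V → V.Nonempty →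
    {n : ℕ | (U ∩ T^[n] ⁻¹' V).Nonempty}.Infinite

/-- Weak mixing: the product system is transitive. -/
def IsWeaklyMixing {α : Type*} [TopologicalSpace α] (T : α → α) : Prop :=
  IsTransitive (Prod.map T T)

/-- Total transitivity. -/
def IsTotallyTransitive {α : Type*} [TopologicalSpace α] (T : α → α) : Prop :=
  ∀ n : ℕ, 0 < n → IsTransitive (T^[n])

/-- A minimal point: its orbit closure is a minimal subsystem. -/
def IsMinimalPoint {α : Type*} [TopologicalSpace α] (T : α → α) (x : α) : Prop :=
  ∀ Y : Set α, Y.Nonempty → IsClosed Y → MapsTo T Y Y → Y ⊆ orbitClosure T x →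
    Y = orbitClosure T x

def IsPeriodicPoint {α : Type*} (T : α → α) (x : α) : Prop :=
  ∃ n : ℕ, 0 < n ∧ T^[n] x = x

def IsPeriodicSystem {α : Type*} (T : α → α) : Prop :=
  ∃ m : ℕ, 0 < m ∧ T^[m] = id

def IsPointwisePeriodic {α : Type*} (T : α → α) : Prop :=
  ∀ x : α, IsPeriodicPoint T x

def IsMSystem {α : Type*} [TopologicalSpace α] (T : α → α) : Prop :=
  IsTransitive T ∧ Dense {x : α | IsMinimalPoint T x}

def IsPSystem {α : Type*} [TopologicalSpace α] (T : α → α) : Prop :=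
  IsTransitive T ∧ Dense {x : α | IsPeriodicPoint T x}

/-- An E-system: transitive with an invariant (Borel) probability measure of full support. -/
def IsESystem {α : Type*} [TopologicalSpace α] (T : α → α) : Prop :=
  IsTransitive T ∧
    let _i : MeasurableSpace α := borel α
    ∃ μ : Measure α, IsProbabilityMeasure μ ∧ μ.map T = μ ∧
      ∀ U : Set α, IsOpen U → U.Nonempty → 0 < μ U

/-- A proximal pair: the orbit closure of `(x, y)` meets the diagonal. -/
def IsProximalPair {α : Type*} [TopologicalSpace α] (T : α → α) (x y : α) : Prop :=
  ∃ z : α, (z, z) ∈ closure (Set.range fun n : ℕ => (T^[n] x, T^[n] y))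

def IsDistalPoint {α : Type*} [TopologicalSpace α] (T : α → α) (x : α) : Prop :=
  ∀ y ∈ orbitClosure T x, IsProximalPair T x y → y = x

def IsDistalSystem {α : Type*} [TopologicalSpace α] (T : α → α) : Prop :=
  ∀ x y : α, IsProximalPair T x y → x = y

/-- The induced map on the hyperspace of non-empty compact (= closed) subsets. -/
def TK {α : Type*} [TopologicalSpace α] (T : α → α) (hT : Continuous T)
    (C : NonemptyCompacts α) : NonemptyCompacts α :=
  ⟨⟨T '' (C : Set α), C.isCompact.image hT⟩, C.nonempty.image T⟩

/-- The induced map on the space of Borel probability measures. -/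
def TM {α : Type*} [TopologicalSpace α] [MeasurableSpace α] [BorelSpace α] (T : α → α)
    (hT : Continuous T) (μ : ProbabilityMeasure α) : ProbabilityMeasure α :=
  μ.map hT.measurable.aemeasurable

/-- Almost dense periodic sets. -/
def AlmostDensePeriodicSets {α : Type*} [TopologicalSpace α] (T : α → α) : Prop :=
  let _i : MeasurableSpace α := borel α
  ∀ U : Set α, IsOpen U → U.Nonempty → ∀ ε : ℝ, 0 < ε →
    ∃ k : ℕ, 0 < k ∧ ∃ μ : Measure α, IsProbabilityMeasure μ ∧ μ.map (T^[k]) = μ ∧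
      μ Uᶜ < ENNReal.ofReal ε

def IsAlmostHYSystem {α : Type*} [TopologicalSpace α] (T : α → α) : Prop :=
  IsTotallyTransitive T ∧ AlmostDensePeriodicSets T

def IsFactorMap {α β : Type*} [TopologicalSpace α] [TopologicalSpace β]
    (T : α → α) (S : β → β) (π : α → β) : Prop :=
  Continuous π ∧ Surjective π ∧ π ∘ T = S ∘ π

def IsJoining {α β : Type*} [TopologicalSpace α] [TopologicalSpace β]
    (T : α → α) (S : β → β) (J : Set (α × β)) : Prop :=
  J.Nonempty ∧ IsClosed J ∧ MapsTo (Prod.map T S) J J ∧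
    Prod.fst '' J = Set.univ ∧ Prod.snd '' J = Set.univ

def AreDisjoint {α β : Type*} [TopologicalSpace α] [TopologicalSpace β]
    (T : α → α) (S : β → β) : Prop :=
  ∀ J : Set (α × β), IsJoining T S J → J = Set.univ

def IsMinimalSystem {β : Type*} [TopologicalSpace β] (S : β → β) : Prop :=
  ∀ Y : Set β, Y.Nonempty → IsClosed Y → MapsTo S Y Y → Y = Set.univ

/-- Disjoint from every minimal system (on a compact metric space). -/
def DisjointFromAllMinimal {α : Type*} [TopologicalSpace α] (T : α → α) : Prop :=
  ∀ (β : Type) (_ : MetricSpace β) (_ : CompactSpace β) (S : β → β),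
    Continuous S → Surjective S → IsMinimalSystem S → AreDisjoint T S

section Aux

open Metric

variable {X : Type*} [MetricSpace X] [CompactSpace X]

lemma TK_coe (T : X → X) (hT : Continuous T) (C : NonemptyCompacts X) :
    ((TK T hT C : NonemptyCompacts X) : Set X) = T '' (C : Set X) := rfl

lemma TK_iterate_coe (T : X → X) (hT : Continuous T) (n : ℕ) (C : NonemptyCompacts X) :
    (((TK T hT)^[n] C : NonemptyCompacts X) : Set X) = T^[n] '' (C : Set X) := by
  induction n with
  | zero => simp
  | succ n ih =>
    rw [Function.iterate_succ_apply', TK_coe, ih, Function.iterate_succ', Set.image_comp]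

lemma edist_ne_top' (C D : NonemptyCompacts X) :
    EMetric.hausdorffEdist (C : Set X) (D : Set X) ≠ ⊤ :=
  Metric.hausdorffEdist_ne_top_of_nonempty_of_bounded C.nonempty D.nonempty
    C.isCompact.isBounded D.isCompact.isBounded

lemma isOpen_sub {U : Set X} (hU : IsOpen U) :
    IsOpen {C : NonemptyCompacts X | (C : Set X) ⊆ U} := by
  rw [Metric.isOpen_iff]
  intro C hC
  obtain ⟨ε, hε, hsub⟩ := C.isCompact.exists_thickening_subset_open hU hC
  refine ⟨ε, hε, fun D hD => ?_⟩
  intro x hx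
  have hdist : hausdorffDist (D : Set X) (C : Set X) < ε := by
    rw [mem_ball, NonemptyCompacts.dist_eq] at hD; exact hD
  obtain ⟨y, hyC, hxy⟩ := exists_dist_lt_of_hausdorffDist_lt hx hdist (edist_ne_top' D C)
  exact hsub (Metric.mem_thickening_iff.2 ⟨y, hyC, hxy⟩)

lemma isOpen_meets {V : Set X} (hV : IsOpen V) :
    IsOpen {C : NonemptyCompacts X | ((C : Set X) ∩ V).Nonempty} := by
  rw [Metric.isOpen_iff]
  rintro C ⟨x, hxC, hxV⟩
  obtain ⟨ε, hε, hball⟩ := Metric.isOpen_iff.1 hV x hxV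
  refine ⟨ε, hε, fun D hD => ?_⟩
  have hdist : hausdorffDist (C : Set X) (D : Set X) < ε := by
    rw [mem_ball, NonemptyCompacts.dist_eq, Metric.hausdorffDist_comm] at hD; exact hD
  obtain ⟨y, hyD, hxy⟩ := exists_dist_lt_of_hausdorffDist_lt hxC hdist (edist_ne_top' C D)
  exact ⟨y, hyD, hball (by rwa [mem_ball, dist_comm])⟩

set_option maxHeartbeats 1000000 in
lemma isClosed_memSet :
    IsClosed {p : NonemptyCompacts X × X | p.2 ∈ (p.1 : Set X)} := by
  have h1 : Continuous fun p : X × NonemptyCompacts X => infDist p.1 (p.2 : Set X) :=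
    Metric.lipschitz_infDist.continuous
  have h2 : Continuous fun p : NonemptyCompacts X × X => (p.2, p.1) :=
    continuous_snd.prodMk continuous_fst
  have hc : Continuous fun p : NonemptyCompacts X × X => infDist p.2 (p.1 : Set X) :=
    h1.comp h2
  have : {p : NonemptyCompacts X × X | p.2 ∈ (p.1 : Set X)}
      = {p : NonemptyCompacts X × X | infDist p.2 (p.1 : Set X) ≤ 0} := by
    ext p
    constructor
    · intro h
      show infDist p.2 (p.1 : Set X) ≤ 0
      exact le_of_eq (infDist_zero_of_mem h)
    · intro h
      exact (p.1.isCompact.isClosed.mem_iff_infDist_zero p.1.nonempty).2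
        (le_antisymm h infDist_nonneg)
  rw [this]
  exact isClosed_le hc continuous_const

lemma continuous_TK (T : X → X) (hT : Continuous T) : Continuous (TK T hT) := by
  rw [Metric.continuous_iff]
  intro C ε hε
  have huc := CompactSpace.uniformContinuous_of_continuous hT
  rw [Metric.uniformContinuous_iff] at huc
  obtain ⟨δ, hδ, hd⟩ := huc (ε / 2) (by positivity)
  refine ⟨δ, hδ, fun D hD => ?_⟩
  have hdist : hausdorffDist (D : Set X) (C : Set X) < δ := by
    rw [NonemptyCompacts.dist_eq] at hD; exact hD
  have key : ∀ (A B : NonemptyCompacts X), hausdorffDist (A : Set X) (B : Set X) < δ →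
      ∀ x ∈ T '' (A : Set X), ∃ y ∈ T '' (B : Set X), dist x y ≤ ε / 2 := by
    rintro A B hAB x ⟨a, haA, rfl⟩
    obtain ⟨b, hbB, hab⟩ := exists_dist_lt_of_hausdorffDist_lt haA hAB (edist_ne_top' A B)
    exact ⟨T b, Set.mem_image_of_mem T hbB, le_of_lt (hd hab)⟩
  have : hausdorffDist (T '' (D : Set X)) (T '' (C : Set X)) ≤ ε / 2 := by
    refine hausdorffDist_le_of_mem_dist (by positivity) (key D C hdist) ?_
    intro y hy
    obtain ⟨x, hx, hxy⟩ := key C D (by rwa [Metric.hausdorffDist_comm]) y hy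
    exact ⟨x, hx, hxy⟩
  calc dist (TK T hT D) (TK T hT C)
      = hausdorffDist (T '' (D : Set X)) (T '' (C : Set X)) := NonemptyCompacts.dist_eq
    _ ≤ ε / 2 := this
    _ < ε := by linarith

end Aux

section Dyn

variable {α : Type*} [TopologicalSpace α]

lemma mem_orbitClosure_self (T : α → α) (x : α) : x ∈ orbitClosure T x :=
  subset_closure ⟨0, rfl⟩

lemma orbit_subset_orbitClosure (T : α → α) (x : α) (n : ℕ) : T^[n] x ∈ orbitClosure T x :=
  subset_closure ⟨n, rfl⟩

lemma mapsTo_orbitClosure {T : α → α} (hT : Continuous T) (x : α) :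
    Set.MapsTo T (orbitClosure T x) (orbitClosure T x) := by
  intro y hy
  have h1 : T '' (Set.range fun n : ℕ => T^[n] x) ⊆ Set.range fun n : ℕ => T^[n] x := by
    rintro _ ⟨_, ⟨n, rfl⟩, rfl⟩
    exact ⟨n + 1, by simp only [Function.iterate_succ_apply']⟩
  have h2 := image_closure_subset_closure_image hT (s := Set.range fun n : ℕ => T^[n] x)
  exact closure_mono h1 (h2 ⟨y, hy, rfl⟩)

lemma exists_minimal_subsystem [CompactSpace α] {T : α → α} (hT : Continuous T) {Z : Set α}
    (hZne : Z.Nonempty) (hZc : IsClosed Z) (hZi : Set.MapsTo T Z Z) :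
    ∃ m, m ⊆ Z ∧ m.Nonempty ∧ IsClosed m ∧ Set.MapsTo T m m ∧
      ∀ Y, Y ⊆ m → Y.Nonempty → IsClosed Y → Set.MapsTo T Y Y → Y = m := by
  set S : Set (Set α) := {Y | Y ⊆ Z ∧ Y.Nonempty ∧ IsClosed Y ∧ Set.MapsTo T Y Y} with hS
  have hchain : ∀ c ⊆ S, IsChain (· ⊆ ·) c → c.Nonempty →
      ∃ lb ∈ S, ∀ s ∈ c, lb ⊆ s := by
    intro c hcS hchain hcne
    have hne : Nonempty c := hcne.to_subtype
    have hdir : DirectedOn (· ⊇ ·) c := by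
      intro x hx y hy
      rcases hchain.total hx hy with h | h
      · exact ⟨x, hx, le_refl _, h⟩
      · exact ⟨y, hy, h, le_refl _⟩
    have hInt : (⋂₀ c).Nonempty := by
      refine IsCompact.nonempty_sInter_of_directed_nonempty_isCompact_isClosed hdir
        (fun U hU => (hcS hU).2.1) (fun U hU => (hcS hU).2.2.1.isCompact)
        (fun U hU => (hcS hU).2.2.1)
    obtain ⟨y0, hy0⟩ := hcne
    refine ⟨⋂₀ c, ⟨(Set.sInter_subset_of_mem hy0).trans (hcS hy0).1, hInt,
      isClosed_sInter fun U hU => (hcS hU).2.2.1, ?_⟩, fun s hs => Set.sInter_subset_of_mem hs⟩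
    intro y hy
    intro U hU
    exact (hcS hU).2.2.2 (hy U hU)
  obtain ⟨m, hmZ, hmmem, hmmin⟩ := zorn_superset_nonempty S hchain Z ⟨le_refl _, hZne, hZc, hZi⟩
  refine ⟨m, hmZ, hmmem.2.1, hmmem.2.2.1, hmmem.2.2.2, ?_⟩
  intro Y hYm hYne hYc hYi
  exact Set.Subset.antisymm hYm (hmmin ⟨hYm.trans hmmem.1, hYne, hYc, hYi⟩ hYm)

end Dyn

section Main

open Metric

variable {X : Type*} [MetricSpace X] [CompactSpace X]

/-- From transitivity of the hyperspace system: simultaneous hitting of two targets. -/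
lemma transitive_pair {T : X → X} (hT : Continuous T) (htrans : IsTransitive (TK T hT))
    {U V1 V2 : Set X} (hU : IsOpen U) (hUne : U.Nonempty) (hV1 : IsOpen V1) (h1 : V1.Nonempty)
    (hV2 : IsOpen V2) (h2 : V2.Nonempty) :
    {n : ℕ | (U ∩ T^[n] ⁻¹' V1).Nonempty ∧ (U ∩ T^[n] ⁻¹' V2).Nonempty}.Infinite := by
  obtain ⟨u, hu⟩ := hUne
  obtain ⟨v1, hv1⟩ := h1
  obtain ⟨v2, hv2⟩ := h2
  set 𝒰 : Set (NonemptyCompacts X) := {C | (C : Set X) ⊆ U} with h𝒰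
  set 𝒱 : Set (NonemptyCompacts X) :=
    {C | ((C : Set X) ∩ V1).Nonempty} ∩ {C | ((C : Set X) ∩ V2).Nonempty} with h𝒱
  have h𝒰o : IsOpen 𝒰 := isOpen_sub hU
  have h𝒰ne : 𝒰.Nonempty := ⟨⟨⟨{u}, isCompact_singleton⟩, Set.singleton_nonempty u⟩, by
    simpa [h𝒰] using hu⟩
  have h𝒱o : IsOpen 𝒱 := (isOpen_meets hV1).inter (isOpen_meets hV2)
  have h𝒱ne : 𝒱.Nonempty := by
    refine ⟨⟨⟨{v1, v2}, (Set.toFinite {v1, v2}).isCompact⟩,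
      ⟨v1, by simp⟩⟩, ⟨v1, Or.inl rfl, hv1⟩, ⟨v2, Or.inr rfl, hv2⟩⟩
  refine (htrans 𝒰 𝒱 h𝒰o h𝒰ne h𝒱o h𝒱ne).mono ?_
  rintro n ⟨C, hC𝒰, hC𝒱⟩
  have hCU : (C : Set X) ⊆ U := hC𝒰
  have h1' : ((((TK T hT)^[n] C : NonemptyCompacts X) : Set X) ∩ V1).Nonempty := hC𝒱.1
  have h2' : ((((TK T hT)^[n] C : NonemptyCompacts X) : Set X) ∩ V2).Nonempty := hC𝒱.2
  rw [TK_iterate_coe] at h1' h2'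
  constructor
  · obtain ⟨_, ⟨a, haC, rfl⟩, hv⟩ := h1'
    exact ⟨a, hCU haC, hv⟩
  · obtain ⟨_, ⟨a, haC, rfl⟩, hv⟩ := h2'
    exact ⟨a, hCU haC, hv⟩

lemma transitive_of_hyper {T : X → X} (hT : Continuous T) (htrans : IsTransitive (TK T hT)) :
    IsTransitive T := by
  intro U V hU hUne hV hVne
  exact (transitive_pair hT htrans hU hUne hV hVne hV hVne).mono fun n hn => hn.1

lemma weaklyMixing_of_hyper {T : X → X} (hT : Continuous T) (hTs : Surjective T)
    (htrans : IsTransitive (TK T hT)) : IsWeaklyMixing T := by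
  intro U V hU hUne hV hVne
  obtain ⟨⟨a, b⟩, hab⟩ := hUne
  obtain ⟨U1, U2, hU1, hU2, haU1, hbU2, hUsub⟩ := isOpen_prod_iff.1 hU a b hab
  obtain ⟨⟨c, d⟩, hcd⟩ := hVne
  obtain ⟨V1, V2, hV1, hV2, hcV1, hdV2, hVsub⟩ := isOpen_prod_iff.1 hV c d hcd
  obtain ⟨n, hn, -⟩ := (transitive_pair hT htrans hU1 ⟨a, haU1⟩ hU2 ⟨b, hbU2⟩ hU2
    ⟨b, hbU2⟩).nonempty
  set W : Set X := U1 ∩ T^[n] ⁻¹' U2 with hWdef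
  have hWo : IsOpen W := hU1.inter ((hT.iterate n).isOpen_preimage U2 hU2)
  have hV2' : IsOpen (T^[n] ⁻¹' V2) := (hT.iterate n).isOpen_preimage V2 hV2
  have hV2ne : (T^[n] ⁻¹' V2).Nonempty := Set.Nonempty.preimage ⟨d, hdV2⟩ (hTs.iterate n)
  refine ((transitive_pair hT htrans hWo hn hV1 ⟨c, hcV1⟩ hV2' hV2ne).mono ?_)
  rintro m ⟨⟨x1, hx1W, hx1V⟩, ⟨x2, hx2W, hx2V⟩⟩
  refine ⟨(x1, T^[n] x2), hUsub ⟨hx1W.1, hx2W.2⟩, ?_⟩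
  rw [Set.mem_preimage, Prod.map_iterate]
  refine hVsub ⟨hx1V, ?_⟩
  show T^[m] (T^[n] x2) ∈ V2
  rw [← Function.iterate_add_apply, Nat.add_comm, Function.iterate_add_apply]
  exact hx2V

/-- Every minimal point of the hyperspace system contains a minimal point of the base. -/
lemma exists_minimalPoint_of_hyper_minimal {T : X → X} (hT : Continuous T)
    {A : NonemptyCompacts X} (hA : IsMinimalPoint (TK T hT) A) :
    ∃ x ∈ (A : Set X), IsMinimalPoint T x := by
  set M : Set (NonemptyCompacts X) := orbitClosure (TK T hT) A with hM
  have hMc : IsClosed M := isClosed_closure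
  have hMcomp : IsCompact M := hMc.isCompact
  have hAM : A ∈ M := mem_orbitClosure_self _ _
  have hMinv : Set.MapsTo (TK T hT) M M := mapsTo_orbitClosure (continuous_TK T hT) A
  obtain ⟨y, hyA⟩ := A.nonempty
  set E : Set (NonemptyCompacts X × X) := {p | p.2 ∈ (p.1 : Set X)} with hE
  set Y : Set X := Prod.snd '' (E ∩ M ×ˢ Set.univ) with hY
  have hYcomp : IsCompact Y := by
    have : IsCompact (E ∩ M ×ˢ Set.univ) :=
      ((hMcomp.prod isCompact_univ).inter_left isClosed_memSet)
    exact this.image continuous_snd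
  have hYmem : ∀ x : X, x ∈ Y ↔ ∃ B ∈ M, x ∈ (B : Set X) := by
    intro x
    constructor
    · rintro ⟨⟨B, x'⟩, ⟨hmem, hBM, -⟩, rfl⟩
      exact ⟨B, hBM, hmem⟩
    · rintro ⟨B, hBM, hxB⟩
      exact ⟨(B, x), ⟨hxB, hBM, Set.mem_univ _⟩, rfl⟩
  have horb : orbitClosure T y ⊆ Y := by
    refine closure_minimal ?_ hYcomp.isClosed
    rintro _ ⟨n, rfl⟩
    refine (hYmem _).2 ⟨(TK T hT)^[n] A, orbit_subset_orbitClosure _ _ n, ?_⟩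
    rw [TK_iterate_coe]
    exact Set.mem_image_of_mem _ hyA
  obtain ⟨m, hmZ, hmne, hmc, hmi, hmmin⟩ := exists_minimal_subsystem hT
    ⟨y, mem_orbitClosure_self T y⟩ isClosed_closure (mapsTo_orbitClosure hT y)
  set N : Set (NonemptyCompacts X) := M ∩ {B | ((B : Set X) ∩ m).Nonempty} with hN
  have hNne : N.Nonempty := by
    obtain ⟨z, hzm⟩ := hmne
    obtain ⟨B, hBM, hzB⟩ := (hYmem z).1 (horb (hmZ hzm))
    exact ⟨B, hBM, z, hzB, hzm⟩
  have hNc : IsClosed N := by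
    refine hMc.inter ?_
    have : {B : NonemptyCompacts X | ((B : Set X) ∩ m).Nonempty}
        = {B : NonemptyCompacts X | (B : Set X) ⊆ mᶜ}ᶜ := by
      ext B
      simp only [Set.mem_setOf_eq, Set.mem_compl_iff]
      rw [Set.not_subset_iff_exists_mem_notMem]
      constructor
      · rintro ⟨z, hz1, hz2⟩; exact ⟨z, hz1, by simpa using hz2⟩
      · rintro ⟨z, hz1, hz2⟩; exact ⟨z, hz1, by simpa using hz2⟩
    rw [this]
    exact (isOpen_sub hmc.isOpen_compl).isClosed_compl
  have hNi : Set.MapsTo (TK T hT) N N := by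
    rintro B ⟨hBM, z, hzB, hzm⟩
    exact ⟨hMinv hBM, T z, Set.mem_image_of_mem T hzB, hmi hzm⟩
  have hNM : N = M := hA N hNne hNc hNi Set.inter_subset_left
  have hAN : A ∈ N := hNM ▸ hAM
  obtain ⟨x, hxA, hxm⟩ := hAN.2
  refine ⟨x, hxA, ?_⟩
  have hxorb : orbitClosure T x ⊆ m :=
    closure_minimal (by rintro _ ⟨n, rfl⟩; exact (hmi.iterate n) hxm) hmc
  have horbm : orbitClosure T x = m :=
    hmmin _ hxorb ⟨x, mem_orbitClosure_self T x⟩ isClosed_closure (mapsTo_orbitClosure hT x)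
  intro Z hZne hZc hZi hZsub
  rw [horbm] at hZsub ⊢
  exact hmmin Z hZsub hZne hZc hZi

end Main

theorem hyperspace_Msystem_implies_wm_Msystem {X : Type*} [MetricSpace X] [CompactSpace X]
    (T : X → X) (hT : Continuous T) (hTs : Surjective T)
    (h : IsMSystem (TK T hT)) :
    IsWeaklyMixing T ∧ IsMSystem T := by
  obtain ⟨htrans, hdense⟩ := h
  refine ⟨weaklyMixing_of_hyper hT hTs htrans, transitive_of_hyper hT htrans, ?_⟩
  rw [dense_iff_inter_open]
  intro U hU hUne
  obtain ⟨u, hu⟩ := hUne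
  obtain ⟨A, hAmin, hAU⟩ := hdense.exists_mem_open (isOpen_sub hU)
    ⟨⟨⟨{u}, isCompact_singleton⟩, Set.singleton_nonempty u⟩, by simpa using hu⟩
  obtain ⟨x, hxA, hxmin⟩ := exists_minimalPoint_of_hyper_minimal hT hAmin
  exact ⟨x, hAU hxA, hxmin⟩

end Paper
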